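/- For all m ≥ 2 with 2^(m-2) ≥ p-1, forb(m, 3, p·K_2) = 2^m + m·2^(m-1) + (p-1)·binom(m,2). -/

import Mathlib

open Finset

/-- `F` is a configuration in the simple matrix `A` (columns of `A` form a finset):
there is an injection of rows such that the multiset `F` of columns is a sub-multiset
of the restricted columns of `A`. -/
def ConfigIn {s k m : ℕ} (F : Multiset (Fin k → Fin s)) (A : Finset (Fin m → Fin s)) : Prop :=
  ∃ ρ : Fin k ↪ Fin m, F ≤ A.1.map (fun col => col ∘ ρ)

/-- The forbidden number: the maximum number of columns of an `m`-rowed simple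
`s`-matrix avoiding `F` as a configuration. -/
noncomputable def forb (m s : ℕ) {k : ℕ} (F : Multiset (Fin k → Fin s)) : ℕ :=
  sSup {n : ℕ | ∃ A : Finset (Fin m → Fin s), ¬ ConfigIn F A ∧ A.card = n}

/-- The 2-rowed configuration with `a` columns (0,0), `b` columns (1,0),
`c` columns (0,1) and `d` columns (1,1), viewed as a 3-matrix. -/
def Fabcd (a b c d : ℕ) : Multiset (Fin 2 → Fin 3) :=
  Multiset.replicate a ![0, 0] + Multiset.replicate b ![1, 0] +
  Multiset.replicate c ![0, 1] + Multiset.replicate d ![1, 1]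

/-- `p` copies of `K₂`. -/
def pK2 (p : ℕ) : Multiset (Fin 2 → Fin 3) := Fabcd p p p p

/-- `p` copies of `I₂`. -/
def pI2 (p : ℕ) : Multiset (Fin 2 → Fin 3) := Fabcd 0 p p 0



/-- `c` avoids the forbidden binary pattern `(al i j, be i j)` on every pair `i < j`. -/
def GoodC {n : ℕ} (al be : Fin n → Fin n → Fin 2) (c : Fin n → Fin 3) : Prop :=
  ∀ i j : Fin n, i < j → ¬(c i = (al i j).castSucc ∧ c j = (be i j).castSucc)

instance {n : ℕ} (al be : Fin n → Fin n → Fin 2) (c : Fin n → Fin 3) :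
    Decidable (GoodC al be c) := by unfold GoodC; infer_instance

def cnt {n : ℕ} (al be : Fin n → Fin n → Fin 2) (F : Fin n → Finset (Fin 3)) : ℕ :=
  (univ.filter fun c : Fin n → Fin 3 => GoodC al be c ∧ ∀ i, c i ∉ F i).card

def wF {n : ℕ} (F : Fin n → Finset (Fin 3)) : ℕ :=
  (univ.filter fun i => (F i).Nonempty).card

def uF {n : ℕ} (F : Fin n → Finset (Fin 3)) : ℕ :=
  (univ.filter fun i => 2 ≤ (F i).card).card

lemma cnt_zero (al be : Fin 0 → Fin 0 → Fin 2) (F : Fin 0 → Finset (Fin 3)) :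
    cnt al be F = 1 := by
  unfold cnt
  rw [Finset.filter_true_of_mem, Finset.card_univ]
  · simp [Fintype.card_fun]
  · intro c _
    exact ⟨fun i => i.elim0, fun i => i.elim0⟩

lemma stat_split {n : ℕ} (G : Fin (n+1) → Finset (Fin 3)) (P : Finset (Fin 3) → Prop)
    [DecidablePred P] :
    (univ.filter fun i => P (G i)).card
      = (if P (G 0) then 1 else 0) + (univ.filter fun i : Fin n => P (G i.succ)).card := by
  rw [Finset.card_filter, Finset.card_filter, Fin.sum_univ_succ]

lemma wF_succ {n : ℕ} (G : Fin (n+1) → Finset (Fin 3)) :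
    wF G = (if (G 0).Nonempty then 1 else 0) + wF (fun i : Fin n => G i.succ) :=
  stat_split G (fun s => s.Nonempty)

lemma uF_succ {n : ℕ} (G : Fin (n+1) → Finset (Fin 3)) :
    uF G = (if 2 ≤ (G 0).card then 1 else 0) + uF (fun i : Fin n => G i.succ) :=
  stat_split G (fun s => 2 ≤ s.card)

section step
variable {n : ℕ} (al be : Fin (n+1) → Fin (n+1) → Fin 2) (F : Fin (n+1) → Finset (Fin 3))

def alS : Fin n → Fin n → Fin 2 := fun i j => al i.succ j.succ

def Fv (v : Fin 3) : Fin n → Finset (Fin 3) :=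
  fun i => F i.succ ∪ (if (al 0 i.succ).castSucc = v then {(be 0 i.succ).castSucc} else ∅)

lemma castSucc_ne_two (x : Fin 2) : (x.castSucc : Fin 3) ≠ 2 := by fin_cases x <;> decide

lemma cons_char (v : Fin 3) (hv : v ∉ F 0) (c' : Fin n → Fin 3) :
    (GoodC al be (Fin.cons v c') ∧ ∀ i, (Fin.cons v c' : Fin (n+1) → Fin 3) i ∉ F i) ↔
    (GoodC (alS al) (alS be) c' ∧ ∀ i, c' i ∉ Fv al be F v i) := by
  constructor
  · rintro ⟨hg, hf⟩
    refine ⟨fun i j hij => ?_, fun i => ?_⟩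
    · have := hg i.succ j.succ (by simpa using hij)
      simpa [alS] using this
    · intro hmem
      rcases Finset.mem_union.mp hmem with h1 | h2
      · exact hf i.succ (by simpa using h1)
      · by_cases hc : (al 0 i.succ).castSucc = v
        · rw [if_pos hc] at h2
          have := hg 0 i.succ (Fin.succ_pos i)
          simp only [Fin.cons_zero, Fin.cons_succ] at this
          exact this ⟨hc.symm, Finset.mem_singleton.mp h2⟩
        · rw [if_neg hc] at h2; exact absurd h2 (Finset.notMem_empty _)
  · rintro ⟨hg, hf⟩
    refine ⟨fun i j hij => ?_, fun i => ?_⟩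
    · rcases Fin.eq_zero_or_eq_succ j with rfl | ⟨j', rfl⟩
      · exact absurd hij (Fin.not_lt_zero i).elim
      · rcases Fin.eq_zero_or_eq_succ i with rfl | ⟨i', rfl⟩
        · simp only [Fin.cons_zero, Fin.cons_succ]
          rintro ⟨hv', hb⟩
          exact hf j' (Finset.mem_union_right _ (by rw [if_pos hv'.symm]; simpa using hb))
        · have := hg i' j' (by simpa using hij)
          simpa [alS] using this
    · rcases Fin.eq_zero_or_eq_succ i with rfl | ⟨i', rfl⟩
      · simpa using hv
      · simp only [Fin.cons_succ]
        exact fun hmem => hf i' (Finset.mem_union_left _ hmem)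

lemma cnt_split :
    cnt al be F = ∑ v : Fin 3, if v ∈ F 0 then 0 else cnt (alS al) (alS be) (Fv al be F v) := by
  unfold cnt
  rw [Finset.card_eq_sum_card_fiberwise (f := fun c => c 0) (t := (univ : Finset (Fin 3)))
    (fun x _ => mem_univ _)]
  refine Finset.sum_congr rfl fun v _ => ?_
  rw [Finset.filter_filter]
  by_cases hv : v ∈ F 0
  · rw [if_pos hv, Finset.card_eq_zero, Finset.filter_eq_empty_iff]
    rintro c - ⟨⟨-, hf⟩, hc0⟩
    exact hf 0 (hc0 ▸ hv)
  · rw [if_neg hv]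
    apply Finset.card_bij' (fun c _ => Fin.tail c) (fun c' _ => (Fin.cons v c' : Fin (n+1) → Fin 3))
    · intro c hc
      simp only [Finset.mem_filter, Finset.mem_univ, true_and] at hc ⊢
      obtain ⟨hP, hc0⟩ := hc
      have : Fin.cons v (Fin.tail c) = c := by
        rw [← hc0]; exact Fin.cons_self_tail c
      exact ((cons_char al be F v hv (Fin.tail c)).mp (by rwa [this]))
    · intro c' hc'
      simp only [Finset.mem_filter, Finset.mem_univ, true_and] at hc' ⊢
      exact ⟨(cons_char al be F v hv c').mpr hc', by simp⟩
    · intro c hc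
      simp only [Finset.mem_filter] at hc
      rw [← hc.2.2]; exact Fin.cons_self_tail c
    · intro c' _
      exact Fin.tail_cons (α := fun _ : Fin (n+1) => Fin 3) v c'

end step

section stats
variable {n : ℕ} (al be : Fin (n+1) → Fin (n+1) → Fin 2) (F : Fin (n+1) → Finset (Fin 3))

lemma castSucc_two_cases (x : Fin 2) : (x.castSucc : Fin 3) = 0 ∨ (x.castSucc : Fin 3) = 1 := by
  fin_cases x <;> simp

lemma Fv_two : Fv al be F 2 = fun i => F i.succ := by
  funext i
  unfold Fv
  rw [if_neg (castSucc_ne_two _), Finset.union_empty]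

lemma Fv_subset (v : Fin 3) (i : Fin n) : F i.succ ⊆ Fv al be F v i :=
  Finset.subset_union_left

lemma wF_mono {G H : Fin n → Finset (Fin 3)} (h : ∀ i, G i ⊆ H i) : wF G ≤ wF H := by
  apply Finset.card_le_card
  intro i hi
  simp only [Finset.mem_filter, Finset.mem_univ, true_and] at hi ⊢
  exact hi.mono (h i)

lemma uF_mono {G H : Fin n → Finset (Fin 3)} (h : ∀ i, G i ⊆ H i) : uF G ≤ uF H := by
  apply Finset.card_le_card
  intro i hi
  simp only [Finset.mem_filter, Finset.mem_univ, true_and] at hi ⊢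
  exact le_trans hi (Finset.card_le_card (h i))

lemma Fv_hF (hF : ∀ i, F i ⊆ ({0,1} : Finset (Fin 3))) (v : Fin 3) (i : Fin n) :
    Fv al be F v i ⊆ ({0,1} : Finset (Fin 3)) := by
  apply Finset.union_subset (hF i.succ)
  by_cases hc : ((al 0 i.succ).castSucc : Fin 3) = v
  · rw [if_pos hc]
    intro x hx
    rw [Finset.mem_singleton.mp hx]
    rcases castSucc_two_cases (be 0 i.succ) with h | h <;> rw [h] <;> simp
  · rw [if_neg hc]; exact Finset.empty_subset _

lemma wF_Fv (v : Fin 3) :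
    wF (Fv al be F v) = wF (fun i : Fin n => F i.succ)
      + (univ.filter fun i : Fin n =>
          ¬(F i.succ).Nonempty ∧ ((al 0 i.succ).castSucc : Fin 3) = v).card := by
  unfold wF
  rw [Finset.card_filter, Finset.card_filter, Finset.card_filter, ← Finset.sum_add_distrib]
  refine Finset.sum_congr rfl fun i _ => ?_
  have hiff : (Fv al be F v i).Nonempty ↔
      (F i.succ).Nonempty ∨ ((al 0 i.succ).castSucc : Fin 3) = v := by
    unfold Fv
    constructor
    · rintro ⟨x, hx⟩
      rcases Finset.mem_union.mp hx with h | h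
      · exact Or.inl ⟨x, h⟩
      · by_cases hc : ((al 0 i.succ).castSucc : Fin 3) = v
        · exact Or.inr hc
        · rw [if_neg hc] at h; exact absurd h (Finset.notMem_empty _)
    · rintro (⟨x, hx⟩ | hc)
      · exact ⟨x, Finset.mem_union_left _ hx⟩
      · exact ⟨_, Finset.mem_union_right _ (by rw [if_pos hc]; exact Finset.mem_singleton_self _)⟩
  by_cases hA : (F i.succ).Nonempty
  · simp [hiff, hA]
  · by_cases hB : ((al 0 i.succ).castSucc : Fin 3) = v <;> simp [hiff, hA, hB]

lemma wF_Fv_sum :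
    wF (Fv al be F 0) + wF (Fv al be F 1) = n + wF (fun i : Fin n => F i.succ) := by
  rw [wF_Fv, wF_Fv]
  have key : ((univ.filter fun i : Fin n =>
        ¬(F i.succ).Nonempty ∧ ((al 0 i.succ).castSucc : Fin 3) = 0).card)
      + ((univ.filter fun i : Fin n =>
        ¬(F i.succ).Nonempty ∧ ((al 0 i.succ).castSucc : Fin 3) = 1).card)
      = (univ.filter fun i : Fin n => ¬(F i.succ).Nonempty).card := by
    rw [Finset.card_filter, Finset.card_filter, Finset.card_filter, ← Finset.sum_add_distrib]
    refine Finset.sum_congr rfl fun i _ => ?_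
    by_cases hA : (F i.succ).Nonempty
    · simp [hA]
    · rcases castSucc_two_cases (al 0 i.succ) with h | h <;> simp [hA, h]
  have hz : (univ.filter fun i : Fin n => ¬(F i.succ).Nonempty).card
      + wF (fun i : Fin n => F i.succ) = n := by
    unfold wF
    simp only []
    rw [add_comm,
      Finset.card_filter_add_card_filter_not (p := fun i : Fin n => (F i.succ).Nonempty)]
    simp
  omega

end stats

lemma key_count : ∀ (n : ℕ) (al be : Fin n → Fin n → Fin 2) (F : Fin n → Finset (Fin 3)),
    (∀ i, F i ⊆ ({0,1} : Finset (Fin 3))) →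
    2 ^ (uF F + 1) * cnt al be F + wF F * 2 ^ n ≤ (n + 2) * 2 ^ n := by
  intro n
  induction n with
  | zero =>
    intro al be F hF
    have hu : uF F = 0 := by simp [uF]
    have hw : wF F = 0 := by simp [wF]
    rw [cnt_zero, hu, hw]
    norm_num
  | succ n ih =>
    intro al be F hF
    have hcnt := cnt_split al be F
    rw [Fin.sum_univ_three] at hcnt
    have IH0 := ih (alS al) (alS be) (Fv al be F 0) (Fv_hF al be F hF 0)
    have IH1 := ih (alS al) (alS be) (Fv al be F 1) (Fv_hF al be F hF 1)
    have IH2 := ih (alS al) (alS be) (Fv al be F 2) (Fv_hF al be F hF 2)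
    rw [Fv_two al be F] at IH2
    have hcnt2 : cnt (alS al) (alS be) (Fv al be F 2)
        = cnt (alS al) (alS be) (fun i : Fin n => F i.succ) := by rw [Fv_two]
    rw [hcnt2] at hcnt
    set c0 := cnt (alS al) (alS be) (Fv al be F 0) with hc0
    set c1 := cnt (alS al) (alS be) (Fv al be F 1) with hc1
    set c2 := cnt (alS al) (alS be) (fun i : Fin n => F i.succ) with hc2
    set u' := uF (fun i : Fin n => F i.succ) with hu'
    set w' := wF (fun i : Fin n => F i.succ) with hw'
    set w0 := wF (Fv al be F 0) with hw0
    set w1 := wF (Fv al be F 1) with hw1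
    have hpow0 : 2 ^ (u' + 1) * c0 ≤ 2 ^ (uF (Fv al be F 0) + 1) * c0 :=
      Nat.mul_le_mul_right _ (Nat.pow_le_pow_right (by norm_num)
        (by exact Nat.add_le_add_right (uF_mono (fun i => Fv_subset al be F 0 i)) 1))
    have hpow1 : 2 ^ (u' + 1) * c1 ≤ 2 ^ (uF (Fv al be F 1) + 1) * c1 :=
      Nat.mul_le_mul_right _ (Nat.pow_le_pow_right (by norm_num)
        (by exact Nat.add_le_add_right (uF_mono (fun i => Fv_subset al be F 1 i)) 1))
    have hwmono0 : w' * 2 ^ n ≤ w0 * 2 ^ n :=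
      Nat.mul_le_mul_right _ (wF_mono (fun i => Fv_subset al be F 0 i))
    have hwmono1 : w' * 2 ^ n ≤ w1 * 2 ^ n :=
      Nat.mul_le_mul_right _ (wF_mono (fun i => Fv_subset al be F 1 i))
    have hWsum : w0 * 2 ^ n + w1 * 2 ^ n = n * 2 ^ n + w' * 2 ^ n := by
      rw [← Nat.add_mul, ← Nat.add_mul]
      rw [wF_Fv_sum al be F]
    have hU := uF_succ F
    have hW := wF_succ F
    rw [← hu'] at hU
    rw [← hw'] at hW
    have hcard2 : (F 0).card ≤ 2 := le_trans (Finset.card_le_card (hF 0)) (by decide)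
    -- case analysis on F 0
    have B0 : 2 ^ (u' + 1) * c0 + w0 * 2 ^ n ≤ (n + 2) * 2 ^ n :=
      le_trans (Nat.add_le_add_right hpow0 _) IH0
    have B1 : 2 ^ (u' + 1) * c1 + w1 * 2 ^ n ≤ (n + 2) * 2 ^ n :=
      le_trans (Nat.add_le_add_right hpow1 _) IH1
    have h2n : (2:ℕ) ^ (n+1) = 2 * 2 ^ n := by ring
    rcases Nat.lt_or_ge (F 0).card 1 with hc | hc1'
    · -- F 0 = ∅
      have h0 : F 0 = ∅ := Finset.card_eq_zero.mp (by omega)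
      rw [h0] at hcnt hU hW
      simp only [Finset.notMem_empty, if_false, Finset.card_empty,
        Finset.not_nonempty_empty] at hcnt hU hW
      norm_num at hU hW
      rw [hcnt, hU, hW, h2n]
      have hsum : (2^(u'+1)*c0 + 2^(u'+1)*c1 + 2^(u'+1)*c2)
          + (w0*2^n + w1*2^n + w'*2^n)
          ≤ (n+2)*2^n + (n+2)*2^n + (n+2)*2^n := by linarith [B0, B1, IH2]
      refine Nat.le_of_add_le_add_right (b := n * 2^n) ?_
      calc 2^(u'+1)*(c0+c1+c2) + w'*(2*2^n) + n*2^n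
          = (2^(u'+1)*c0 + 2^(u'+1)*c1 + 2^(u'+1)*c2)
              + ((w0*2^n + w1*2^n) + w'*2^n) := by rw [hWsum]; ring
        _ ≤ (n+2)*2^n + (n+2)*2^n + (n+2)*2^n := hsum
        _ = (n+1+2)*(2*2^n) + n*2^n := by ring
    rcases Nat.lt_or_ge (F 0).card 2 with hc | hc2'
    · -- F 0 = {x}
      obtain ⟨x, hx⟩ := Finset.card_eq_one.mp (by omega : (F 0).card = 1)
      have hxmem : x ∈ ({0,1} : Finset (Fin 3)) := hF 0 (hx ▸ Finset.mem_singleton_self x)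
      rw [hx] at hcnt hU hW
      rw [if_pos (Finset.singleton_nonempty x)] at hW
      rw [if_neg (by simp)] at hU
      rw [hU, hW, h2n]
      rcases Finset.mem_insert.mp hxmem with rfl | hx1
      · -- x = 0 : allowed v = 1, 2
        rw [if_pos (Finset.mem_singleton_self 0), if_neg (by decide), if_neg (by decide)]
          at hcnt
        rw [hcnt]
        calc 2^(0+u'+1)*(0 + c1 + c2) + (1+w')*(2*2^n)
            = (2^(u'+1)*c1 + w'*2^n) + (2^(u'+1)*c2 + w'*2^n) + 2*2^n := by ring
          _ ≤ (2^(u'+1)*c1 + w1*2^n) + (2^(u'+1)*c2 + w'*2^n) + 2*2^n := by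
                have := hwmono1; omega
          _ ≤ (n+2)*2^n + (n+2)*2^n + 2*2^n := by
                have := B1; have := IH2; omega
          _ ≤ (n+1+2)*(2*2^n) := by ring_nf; omega
      · -- x = 1
        have hx1' : x = 1 := Finset.mem_singleton.mp hx1
        subst hx1'
        rw [if_neg (by decide), if_pos (Finset.mem_singleton_self 1), if_neg (by decide)]
          at hcnt
        rw [hcnt]
        calc 2^(0+u'+1)*(c0 + 0 + c2) + (1+w')*(2*2^n)
            = (2^(u'+1)*c0 + w'*2^n) + (2^(u'+1)*c2 + w'*2^n) + 2*2^n := by ring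
          _ ≤ (2^(u'+1)*c0 + w0*2^n) + (2^(u'+1)*c2 + w'*2^n) + 2*2^n := by
                have := hwmono0; omega
          _ ≤ (n+2)*2^n + (n+2)*2^n + 2*2^n := by
                have := B0; have := IH2; omega
          _ ≤ (n+1+2)*(2*2^n) := by ring_nf; omega
    · -- F 0 = {0,1}
      have h01 : F 0 = ({0,1} : Finset (Fin 3)) :=
        Finset.eq_of_subset_of_card_le (hF 0)
          (by rw [(by decide : ({0,1} : Finset (Fin 3)).card = 2)]; exact hc2')
      rw [h01] at hcnt hU hW
      rw [if_pos (by decide), if_pos (by decide), if_neg (by decide)] at hcnt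
      rw [if_pos (by decide)] at hU
      rw [if_pos (by decide)] at hW
      rw [hcnt, hU, hW, h2n]
      calc 2^(1+u'+1)*(0+0+c2) + (1+w')*(2*2^n)
          = 2*(2^(u'+1)*c2 + w'*2^n) + 2*2^n := by ring
        _ ≤ 2*((n+2)*2^n) + 2*2^n := by
              have := IH2; omega
        _ ≤ (n+1+2)*(2*2^n) := by ring_nf; omega

/-! ### Part A: upper bound -/

def pairEmb {m : ℕ} (i j : Fin m) (h : i ≠ j) : Fin 2 ↪ Fin m :=
  ⟨![i, j], by
    intro a b hab
    fin_cases a <;> fin_cases b <;> simp_all <;> exact absurd hab.symm h⟩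

lemma count_pK2_four (p : ℕ) :
    ((pK2 p).count ![0, 0] = p) ∧ ((pK2 p).count ![1, 0] = p) ∧
    ((pK2 p).count ![0, 1] = p) ∧ ((pK2 p).count ![1, 1] = p) := by
  unfold pK2 Fabcd
  refine ⟨?_, ?_, ?_, ?_⟩ <;>
  · repeat rw [Multiset.count_add]
    repeat rw [Multiset.count_replicate]
    simp only [show ((![0, 0] : Fin 2 → Fin 3) = ![0, 0]) = True from eq_true rfl,
      show ((![0, 0] : Fin 2 → Fin 3) = ![1, 0]) = False from eq_false (by decide),
      show ((![0, 0] : Fin 2 → Fin 3) = ![0, 1]) = False from eq_false (by decide),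
      show ((![0, 0] : Fin 2 → Fin 3) = ![1, 1]) = False from eq_false (by decide),
      show ((![1, 0] : Fin 2 → Fin 3) = ![0, 0]) = False from eq_false (by decide),
      show ((![1, 0] : Fin 2 → Fin 3) = ![1, 0]) = True from eq_true rfl,
      show ((![1, 0] : Fin 2 → Fin 3) = ![0, 1]) = False from eq_false (by decide),
      show ((![1, 0] : Fin 2 → Fin 3) = ![1, 1]) = False from eq_false (by decide),
      show ((![0, 1] : Fin 2 → Fin 3) = ![0, 0]) = False from eq_false (by decide),
      show ((![0, 1] : Fin 2 → Fin 3) = ![1, 0]) = False from eq_false (by decide),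
      show ((![0, 1] : Fin 2 → Fin 3) = ![0, 1]) = True from eq_true rfl,
      show ((![0, 1] : Fin 2 → Fin 3) = ![1, 1]) = False from eq_false (by decide),
      show ((![1, 1] : Fin 2 → Fin 3) = ![0, 0]) = False from eq_false (by decide),
      show ((![1, 1] : Fin 2 → Fin 3) = ![1, 0]) = False from eq_false (by decide),
      show ((![1, 1] : Fin 2 → Fin 3) = ![0, 1]) = False from eq_false (by decide),
      show ((![1, 1] : Fin 2 → Fin 3) = ![1, 1]) = True from eq_true rfl, if_true, if_false]
    omega

lemma mem_pK2_four (p : ℕ) {x : Fin 2 → Fin 3} (hx : 0 < (pK2 p).count x) :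
    x = ![0, 0] ∨ x = ![1, 0] ∨ x = ![0, 1] ∨ x = ![1, 1] := by
  by_contra hc
  push_neg at hc
  obtain ⟨h1, h2, h3, h4⟩ := hc
  unfold pK2 Fabcd at hx
  rw [Multiset.count_add, Multiset.count_add, Multiset.count_add,
    Multiset.count_replicate, Multiset.count_replicate, Multiset.count_replicate,
    Multiset.count_replicate] at hx
  rw [if_neg (fun h => h1 h.symm), if_neg (fun h => h2 h.symm),
    if_neg (fun h => h3 h.symm), if_neg (fun h => h4 h.symm)] at hx
  omega

lemma count_map_pair {m : ℕ} (A : Finset (Fin m → Fin 3)) (i j : Fin m) (hij : i ≠ j)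
    (a b : Fin 3) :
    ((A.1.map (fun col => col ∘ (pairEmb i j hij))).count ![a, b])
      = (A.filter fun c => c i = a ∧ c j = b).card := by
  rw [Multiset.count_map]
  have heq : ∀ c : Fin m → Fin 3,
      (![a, b] = c ∘ (pairEmb i j hij)) ↔ (c i = a ∧ c j = b) := by
    intro c
    rw [funext_iff, Fin.forall_fin_two]
    constructor
    · rintro ⟨h0, h1⟩
      exact ⟨h0.symm, h1.symm⟩
    · rintro ⟨h0, h1⟩
      exact ⟨h0.symm, h1.symm⟩
  have : Multiset.filter (fun c => ![a, b] = c ∘ (pairEmb i j hij)) A.1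
      = Multiset.filter (fun c => c i = a ∧ c j = b) A.1 :=
    Multiset.filter_congr (fun c _ => heq c)
  rw [this]
  rfl

lemma deficient {m p : ℕ} (hp : 1 ≤ p) (A : Finset (Fin m → Fin 3))
    (hA : ¬ ConfigIn (pK2 p) A) {i j : Fin m} (hij : i ≠ j) :
    ∃ ab : Fin 2 × Fin 2,
      (A.filter fun c => c i = ab.1.castSucc ∧ c j = ab.2.castSucc).card ≤ p - 1 := by
  have hρ : ¬ (pK2 p ≤ A.1.map (fun col => col ∘ (pairEmb i j hij))) :=
    fun hle => hA ⟨_, hle⟩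
  rw [Multiset.le_iff_count] at hρ
  push_neg at hρ
  obtain ⟨x, hx⟩ := hρ
  have hpos : 0 < (pK2 p).count x := lt_of_le_of_lt (Nat.zero_le _) hx
  obtain ⟨hk1, hk2, hk3, hk4⟩ := count_pK2_four p
  rcases mem_pK2_four p hpos with rfl | rfl | rfl | rfl
  · refine ⟨(0, 0), ?_⟩
    show (A.filter fun c => c i = (0 : Fin 3) ∧ c j = (0 : Fin 3)).card ≤ p - 1
    rw [hk1] at hx
    rw [count_map_pair A i j hij 0 0] at hx
    exact Nat.le_pred_of_lt hx
  · refine ⟨(1, 0), ?_⟩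
    show (A.filter fun c => c i = (1 : Fin 3) ∧ c j = (0 : Fin 3)).card ≤ p - 1
    rw [hk2] at hx
    rw [count_map_pair A i j hij 1 0] at hx
    exact Nat.le_pred_of_lt hx
  · refine ⟨(0, 1), ?_⟩
    show (A.filter fun c => c i = (0 : Fin 3) ∧ c j = (1 : Fin 3)).card ≤ p - 1
    rw [hk3] at hx
    rw [count_map_pair A i j hij 0 1] at hx
    exact Nat.le_pred_of_lt hx
  · refine ⟨(1, 1), ?_⟩
    show (A.filter fun c => c i = (1 : Fin 3) ∧ c j = (1 : Fin 3)).card ≤ p - 1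
    rw [hk4] at hx
    rw [count_map_pair A i j hij 1 1] at hx
    exact Nat.le_pred_of_lt hx

lemma pair_inj {m : ℕ} {a b c d : Fin m} (hab : a < b) (hcd : c < d)
    (h : ({a, b} : Finset (Fin m)) = {c, d}) : a = c ∧ b = d := by
  have ha : a = c ∨ a = d := by
    have := h ▸ Finset.mem_insert_self a {b}
    simpa using this
  have hb : b = c ∨ b = d := by
    have hbm : b ∈ ({a, b} : Finset (Fin m)) :=
      Finset.mem_insert_of_mem (Finset.mem_singleton_self b)
    have := h ▸ hbm
    simpa using this
  have hab' : a.val < b.val := hab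
  have hcd' : c.val < d.val := hcd
  have ha' : a.val = c.val ∨ a.val = d.val := by
    rcases ha with h' | h' <;> [left; right] <;> rw [h']
  have hb' : b.val = c.val ∨ b.val = d.val := by
    rcases hb with h' | h' <;> [left; right] <;> rw [h']
  constructor <;> apply Fin.ext <;> omega

lemma card_pairs (m : ℕ) :
    ((univ : Finset (Fin m × Fin m)).filter fun q => q.1 < q.2).card = m.choose 2 := by
  rw [show m.choose 2 = (Finset.powersetCard 2 (univ : Finset (Fin m))).card by
    rw [Finset.card_powersetCard, Finset.card_univ, Fintype.card_fin]]
  apply Finset.card_nbij (fun q => ({q.1, q.2} : Finset (Fin m)))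
  · intro q hq
    simp only [Finset.mem_coe, Finset.mem_filter, Finset.mem_univ, true_and] at hq
    rw [Finset.mem_coe, Finset.mem_powersetCard]
    refine ⟨Finset.subset_univ _, ?_⟩
    rw [Finset.card_insert_of_notMem (fun hmem => absurd (Finset.mem_singleton.mp hmem) (ne_of_lt hq)),
      Finset.card_singleton]
  · intro q hq q' hq' hqq
    simp only [Finset.coe_filter, Set.mem_setOf_eq, Finset.mem_univ, true_and] at hq hq'
    obtain ⟨h1, h2⟩ := pair_inj hq hq' hqq
    exact Prod.ext h1 h2
  · intro s hs
    have hcard : s.card = 2 := by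
      rw [Finset.mem_coe, Finset.mem_powersetCard] at hs
      exact hs.2
    obtain ⟨a, b, hab, rfl⟩ := Finset.card_eq_two.mp hcard
    rcases hab.lt_or_gt with h' | h'
    · exact ⟨(a, b), by simp [h'], rfl⟩
    · exact ⟨(b, a), by simp [h'], by rw [Finset.pair_comm]⟩

lemma upper_bound {m p : ℕ} (hp : 1 ≤ p) (hm : 1 ≤ m) (A : Finset (Fin m → Fin 3))
    (hA : ¬ ConfigIn (pK2 p) A) :
    A.card ≤ 2 ^ m + m * 2 ^ (m - 1) + (p - 1) * Nat.choose m 2 := by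
  classical
  have hch : ∀ q : Fin m × Fin m, ∃ ab : Fin 2 × Fin 2, q.1 ≠ q.2 →
      (A.filter fun c => c q.1 = ab.1.castSucc ∧ c q.2 = ab.2.castSucc).card ≤ p - 1 := by
    intro q
    by_cases hq : q.1 ≠ q.2
    · obtain ⟨ab, hab⟩ := deficient hp A hA hq
      exact ⟨ab, fun _ => hab⟩
    · exact ⟨(0, 0), fun h => absurd h hq⟩
  choose f hf using hch
  set al : Fin m → Fin m → Fin 2 := fun i j => (f (i, j)).1 with hal
  set be : Fin m → Fin m → Fin 2 := fun i j => (f (i, j)).2 with hbe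
  have hsplit := Finset.card_filter_add_card_filter_not
    (s := A) (p := fun c => GoodC al be c)
  -- Good part
  have hGsub : A.filter (fun c => GoodC al be c)
      ⊆ univ.filter (fun c => GoodC al be c ∧ ∀ i, c i ∉ (∅ : Finset (Fin 3))) := by
    intro c hc
    simp only [Finset.mem_filter, Finset.mem_univ, true_and, Finset.notMem_empty,
      not_false_iff, and_true] at hc ⊢
    exact ⟨hc.2, fun _ => trivial⟩
  have hkey := key_count m al be (fun _ => ∅) (fun i => Finset.empty_subset _)
  have hu0 : uF (fun _ : Fin m => (∅ : Finset (Fin 3))) = 0 := by simp [uF]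
  have hw0 : wF (fun _ : Fin m => (∅ : Finset (Fin 3))) = 0 := by simp [wF]
  rw [hu0, hw0] at hkey
  have hGood : (A.filter (fun c => GoodC al be c)).card ≤ 2 ^ m + m * 2 ^ (m - 1) := by
    have hcle : (A.filter (fun c => GoodC al be c)).card ≤ cnt al be (fun _ => ∅) :=
      Finset.card_le_card hGsub
    obtain ⟨k, rfl⟩ : ∃ k, m = k + 1 := ⟨m - 1, by omega⟩
    simp only [Nat.add_sub_cancel]
    have h2 : (k + 1 + 2) * 2 ^ (k + 1) = 2 * (2 ^ (k + 1) + (k + 1) * 2 ^ k) := by ring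
    set X := cnt al be (fun _ : Fin (k+1) => (∅ : Finset (Fin 3)))
    set Y := (A.filter (fun c => GoodC al be c)).card
    norm_num at hkey
    linarith
  -- Bad part
  have hBad : (A.filter (fun c => ¬ GoodC al be c)).card ≤ (p - 1) * m.choose 2 := by
    set P := (univ : Finset (Fin m × Fin m)).filter fun q => q.1 < q.2 with hP
    have hsub : A.filter (fun c => ¬ GoodC al be c) ⊆ P.biUnion (fun q =>
        A.filter fun c => c q.1 = (al q.1 q.2).castSucc ∧ c q.2 = (be q.1 q.2).castSucc) := by
      intro c hc
      rw [Finset.mem_filter] at hc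
      obtain ⟨hcA, hng⟩ := hc
      unfold GoodC at hng
      push_neg at hng
      obtain ⟨i, j, hij, hconj⟩ := hng
      rw [Finset.mem_biUnion]
      exact ⟨(i, j), Finset.mem_filter.mpr ⟨Finset.mem_univ _, hij⟩,
        Finset.mem_filter.mpr ⟨hcA, hconj⟩⟩
    calc (A.filter (fun c => ¬ GoodC al be c)).card
        ≤ (P.biUnion (fun q => A.filter fun c =>
            c q.1 = (al q.1 q.2).castSucc ∧ c q.2 = (be q.1 q.2).castSucc)).card :=
          Finset.card_le_card hsub
      _ ≤ ∑ q ∈ P, (A.filter fun c =>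
            c q.1 = (al q.1 q.2).castSucc ∧ c q.2 = (be q.1 q.2).castSucc).card :=
          Finset.card_biUnion_le
      _ ≤ ∑ _q ∈ P, (p - 1) := by
          apply Finset.sum_le_sum
          intro q hq
          rw [hP, Finset.mem_filter] at hq
          exact hf q (ne_of_lt hq.2)
      _ = P.card * (p - 1) := by rw [Finset.sum_const, smul_eq_mul]
      _ = (p - 1) * m.choose 2 := by rw [hP, card_pairs, Nat.mul_comm]
  omega

/-! ### Part B: lower bound construction -/

lemma count_map_emb {m : ℕ} (A : Finset (Fin m → Fin 3)) (ρ : Fin 2 ↪ Fin m)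
    (a b : Fin 3) :
    ((A.1.map (fun col => col ∘ ρ)).count ![a, b])
      = (A.filter fun c => c (ρ 0) = a ∧ c (ρ 1) = b).card := by
  rw [Multiset.count_map]
  have heq : ∀ c : Fin m → Fin 3,
      (![a, b] = c ∘ ρ) ↔ (c (ρ 0) = a ∧ c (ρ 1) = b) := by
    intro c
    rw [funext_iff, Fin.forall_fin_two]
    constructor
    · rintro ⟨h0, h1⟩
      exact ⟨h0.symm, h1.symm⟩
    · rintro ⟨h0, h1⟩
      exact ⟨h0.symm, h1.symm⟩
  have : Multiset.filter (fun c => ![a, b] = c ∘ ρ) A.1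
      = Multiset.filter (fun c => c (ρ 0) = a ∧ c (ρ 1) = b) A.1 :=
    Multiset.filter_congr (fun c _ => heq c)
  rw [this]
  rfl

lemma card_pair_set {m : ℕ} {a b : Fin m} (hab : a ≠ b) :
    ({a, b} : Finset (Fin m)).card = 2 := by
  rw [Finset.card_insert_of_notMem (fun hmem => hab (Finset.mem_singleton.mp hmem)),
    Finset.card_singleton]

/-- columns with no zero: at least `2^m` of them -/
lemma card_B0 (m : ℕ) :
    2 ^ m ≤ (univ.filter fun c : Fin m → Fin 3 => ∀ r, c r ≠ 0).card := by
  have := Finset.card_le_card_of_injOn (f := fun (g : Fin m → Fin 2) (r : Fin m) => (g r).succ)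
    (s := univ) (t := univ.filter fun c : Fin m → Fin 3 => ∀ r, c r ≠ 0)
    (fun g _ => by
      simp only [Finset.mem_coe, Finset.mem_filter, Finset.mem_univ, true_and]
      exact fun r => Fin.succ_ne_zero _)
    (fun g _ g' _ hgg => by
      funext r
      have := congrFun hgg r
      exact Fin.succ_injective _ this)
  simpa [Fintype.card_fun] using this

/-- columns with zero exactly at i : at least `2^(m-1)` of them -/
lemma card_Bi {m : ℕ} (hm : 1 ≤ m) (i : Fin m) :
    2 ^ (m - 1) ≤ (univ.filter fun c : Fin m → Fin 3 => ∀ r, c r = 0 ↔ r = i).card := by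
  classical
  have hcard : Fintype.card {r : Fin m // ¬ (r = i)} = m - 1 := by
    rw [Fintype.card_subtype_compl, Fintype.card_subtype_eq, Fintype.card_fin]
  have := Finset.card_le_card_of_injOn
    (f := fun (g : {r : Fin m // ¬ (r = i)} → Fin 2) (r : Fin m) =>
      if h : r = i then 0 else (g ⟨r, h⟩).succ)
    (s := univ) (t := univ.filter fun c : Fin m → Fin 3 => ∀ r, c r = 0 ↔ r = i)
    (fun g _ => by
      simp only [Finset.mem_coe, Finset.mem_filter, Finset.mem_univ, true_and]
      intro r
      by_cases h : r = i
      · simp [h]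
      · simp [h, Fin.succ_ne_zero])
    (fun g _ g' _ hgg => by
      funext r
      have h1 := congrFun hgg r.1
      simp only [dif_neg r.2] at h1
      have h2 := Fin.succ_injective _ h1
      simpa using h2)
  simpa [Fintype.card_fun, hcard] using this

/-- columns with zeros exactly at {a, b} : at least `2^(m-2)` of them -/
lemma card_Sq {m : ℕ} {a b : Fin m} (hab : a ≠ b) :
    2 ^ (m - 2) ≤ (univ.filter fun c : Fin m → Fin 3 =>
      ∀ r, c r = 0 ↔ (r = a ∨ r = b)).card := by
  classical
  have hfil : (univ.filter fun r : Fin m => r = a ∨ r = b) = {a, b} := by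
    ext r
    simp [Finset.mem_insert, Finset.mem_singleton]
  have hcard : Fintype.card {r : Fin m // ¬ (r = a ∨ r = b)} = m - 2 := by
    rw [Fintype.card_subtype_compl]
    congr 1
    · exact Fintype.card_fin m
    · rw [Fintype.card_subtype, hfil, card_pair_set hab]
  have := Finset.card_le_card_of_injOn
    (f := fun (g : {r : Fin m // ¬ (r = a ∨ r = b)} → Fin 2) (r : Fin m) =>
      if h : r = a ∨ r = b then 0 else (g ⟨r, h⟩).succ)
    (s := univ) (t := univ.filter fun c : Fin m → Fin 3 =>
      ∀ r, c r = 0 ↔ (r = a ∨ r = b))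
    (fun g _ => by
      simp only [Finset.mem_coe, Finset.mem_filter, Finset.mem_univ, true_and]
      intro r
      by_cases h : r = a ∨ r = b
      · simp [h]
      · simp [h, Fin.succ_ne_zero])
    (fun g _ g' _ hgg => by
      funext r
      have h1 := congrFun hgg r.1
      simp only [dif_neg r.2] at h1
      have h2 := Fin.succ_injective _ h1
      simpa using h2)
  rw [Finset.card_univ, Fintype.card_fun, Fintype.card_fin, hcard] at this
  exact this

lemma lower_bound {m p : ℕ} (hp : 1 ≤ p) (hm : 2 ≤ m) (h : p - 1 ≤ 2 ^ (m - 2)) :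
    ∃ A : Finset (Fin m → Fin 3), ¬ ConfigIn (pK2 p) A ∧
      2 ^ m + m * 2 ^ (m - 1) + (p - 1) * Nat.choose m 2 ≤ A.card := by
  classical
  set P := (univ : Finset (Fin m × Fin m)).filter fun q => q.1 < q.2 with hPdef
  set S : Fin m × Fin m → Finset (Fin m → Fin 3) :=
    fun q => univ.filter fun c => ∀ r, c r = 0 ↔ (r = q.1 ∨ r = q.2) with hSdef
  have hTex : ∀ q : Fin m × Fin m, ∃ t, t ⊆ S q ∧ (q.1 < q.2 → t.card = p - 1) := by
    intro q
    by_cases hq : q.1 < q.2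
    · obtain ⟨t, ht, hc⟩ := Finset.exists_subset_card_eq
        (le_trans h (card_Sq (ne_of_lt hq)))
      exact ⟨t, ht, fun _ => hc⟩
    · exact ⟨∅, Finset.empty_subset _, fun h' => absurd h' hq⟩
  choose T hTsub hTcard using hTex
  set A1 := univ.filter
    (fun c : Fin m → Fin 3 => (univ.filter fun r => c r = 0).card ≤ 1) with hA1
  set A := A1 ∪ P.biUnion T with hA
  -- zero set of columns in S q
  have hzeroS : ∀ q : Fin m × Fin m, ∀ c ∈ S q,
      (univ.filter fun r => c r = 0) = {q.1, q.2} := by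
    intro q c hc
    rw [hSdef, Finset.mem_filter] at hc
    ext r
    simp only [Finset.mem_filter, Finset.mem_univ, true_and, Finset.mem_insert,
      Finset.mem_singleton]
    exact hc.2 r
  have hnotA1 : ∀ q ∈ P, ∀ c ∈ T q, c ∉ A1 := by
    intro q hq c hcT hcA1
    have hqlt : q.1 < q.2 := (Finset.mem_filter.mp hq).2
    have hz := hzeroS q c (hTsub q hcT)
    rw [hA1, Finset.mem_filter] at hcA1
    rw [hz, card_pair_set (ne_of_lt hqlt)] at hcA1
    omega
  have hdisj : Disjoint A1 (P.biUnion T) := by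
    rw [Finset.disjoint_left]
    intro c hcA1 hcB
    obtain ⟨q, hqP, hcT⟩ := Finset.mem_biUnion.mp hcB
    exact hnotA1 q hqP c hcT hcA1
  have hTdisj : ∀ q ∈ P, ∀ q' ∈ P, q ≠ q' → Disjoint (T q) (T q') := by
    intro q hq q' hq' hne
    rw [Finset.disjoint_left]
    intro c hcT hcT'
    have h1 := hzeroS q c (hTsub q hcT)
    have h2 := hzeroS q' c (hTsub q' hcT')
    have hqlt : q.1 < q.2 := (Finset.mem_filter.mp hq).2
    have hq'lt : q'.1 < q'.2 := (Finset.mem_filter.mp hq').2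
    obtain ⟨e1, e2⟩ := pair_inj hqlt hq'lt (h1.symm.trans h2)
    exact hne (Prod.ext e1 e2)
  -- cardinality
  have hcardA : A.card = A1.card + (m.choose 2) * (p - 1) := by
    rw [hA, Finset.card_union_of_disjoint hdisj, Finset.card_biUnion hTdisj]
    congr 1
    rw [Finset.sum_congr rfl (fun q hq => hTcard q (Finset.mem_filter.mp hq).2),
      Finset.sum_const, smul_eq_mul]
    rw [card_pairs]
  have hcardA1 : 2 ^ m + m * 2 ^ (m - 1) ≤ A1.card := by
    set B0 := univ.filter (fun c : Fin m → Fin 3 => ∀ r, c r ≠ 0) with hB0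
    set Bi : Fin m → Finset (Fin m → Fin 3) :=
      fun i => univ.filter (fun c : Fin m → Fin 3 => ∀ r, c r = 0 ↔ r = i) with hBi
    have hzB : ∀ i : Fin m, ∀ c ∈ Bi i, (univ.filter fun r => c r = 0) = {i} := by
      intro i c hc
      rw [hBi, Finset.mem_filter] at hc
      ext r
      simp only [Finset.mem_filter, Finset.mem_univ, true_and, Finset.mem_singleton]
      exact hc.2 r
    have hsub : B0 ∪ univ.biUnion Bi ⊆ A1 := by
      intro c hc
      rw [hA1, Finset.mem_filter]
      refine ⟨Finset.mem_univ _, ?_⟩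
      rcases Finset.mem_union.mp hc with hc0 | hci
      · rw [hB0, Finset.mem_filter] at hc0
        have : (univ.filter fun r => c r = 0) = ∅ := by
          rw [Finset.filter_eq_empty_iff]
          exact fun r _ => hc0.2 r
        rw [this, Finset.card_empty]
        omega
      · obtain ⟨i, _, hci⟩ := Finset.mem_biUnion.mp hci
        rw [hzB i c hci, Finset.card_singleton]
    have hd0 : Disjoint B0 (univ.biUnion Bi) := by
      rw [Finset.disjoint_left]
      intro c hc0 hcB
      obtain ⟨i, _, hci⟩ := Finset.mem_biUnion.mp hcB
      rw [hB0, Finset.mem_filter] at hc0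
      rw [hBi, Finset.mem_filter] at hci
      exact hc0.2 i ((hci.2 i).mpr rfl)
    have hdB : ∀ i ∈ (univ : Finset (Fin m)), ∀ j ∈ (univ : Finset (Fin m)),
        i ≠ j → Disjoint (Bi i) (Bi j) := by
      intro i _ j _ hij
      rw [Finset.disjoint_left]
      intro c hci hcj
      rw [hBi, Finset.mem_filter] at hci hcj
      have e1 : c i = 0 := (hci.2 i).mpr rfl
      exact hij ((hcj.2 i).mp e1)
    calc 2 ^ m + m * 2 ^ (m - 1)
        ≤ B0.card + ∑ i : Fin m, (Bi i).card := by
          have h1 := card_B0 m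
          have h2 : m * 2 ^ (m - 1) ≤ ∑ i : Fin m, (Bi i).card := by
            calc m * 2 ^ (m - 1) = ∑ _i : Fin m, 2 ^ (m - 1) := by
                  rw [Finset.sum_const, Finset.card_univ, Fintype.card_fin, smul_eq_mul]
              _ ≤ ∑ i : Fin m, (Bi i).card :=
                  Finset.sum_le_sum (fun i _ => card_Bi (le_trans one_le_two hm) i)
          exact Nat.add_le_add h1 h2
      _ = (B0 ∪ univ.biUnion Bi).card := by
          rw [Finset.card_union_of_disjoint hd0, Finset.card_biUnion hdB]
      _ ≤ A1.card := Finset.card_le_card hsub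
  have hfinal : 2 ^ m + m * 2 ^ (m - 1) + (p - 1) * Nat.choose m 2 ≤ A.card := by
    calc 2 ^ m + m * 2 ^ (m - 1) + (p - 1) * Nat.choose m 2
        = 2 ^ m + m * 2 ^ (m - 1) + Nat.choose m 2 * (p - 1) := by ring
      _ ≤ A1.card + Nat.choose m 2 * (p - 1) := Nat.add_le_add_right hcardA1 _
      _ = A.card := hcardA.symm
  refine ⟨A, ?_, hfinal⟩
  -- avoidance
  rintro ⟨ρ, hle⟩
  have hij : ρ 0 ≠ ρ 1 := fun hEq => (by decide : (0 : Fin 2) ≠ 1) (ρ.injective hEq)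
  have hcount := Multiset.le_iff_count.mp hle ![0, 0]
  rw [count_map_emb A ρ 0 0, (count_pK2_four p).1] at hcount
  set q0 : Fin m × Fin m := if ρ 0 < ρ 1 then (ρ 0, ρ 1) else (ρ 1, ρ 0) with hq0
  have hq0lt : q0.1 < q0.2 := by
    rcases lt_or_gt_of_ne hij with h' | h'
    · rw [hq0, if_pos h']; exact h'
    · rw [hq0, if_neg (not_lt_of_gt h')]; exact h'
  have hsubT : A.filter (fun c => c (ρ 0) = 0 ∧ c (ρ 1) = 0) ⊆ T q0 := by
    intro c hc
    rw [Finset.mem_filter] at hc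
    obtain ⟨hcA, h0, h1⟩ := hc
    rcases Finset.mem_union.mp hcA with hc1 | hcB
    · exfalso
      rw [hA1, Finset.mem_filter] at hc1
      have hpsub : ({ρ 0, ρ 1} : Finset (Fin m)) ⊆ univ.filter fun r => c r = 0 := by
        intro r hr
        rcases Finset.mem_insert.mp hr with rfl | hr'
        · exact Finset.mem_filter.mpr ⟨Finset.mem_univ _, h0⟩
        · rw [Finset.mem_singleton.mp hr']
          exact Finset.mem_filter.mpr ⟨Finset.mem_univ _, h1⟩
      have := Finset.card_le_card hpsub
      rw [card_pair_set hij] at this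
      exact absurd (le_trans this hc1.2) (by norm_num)
    · obtain ⟨⟨x, y⟩, hq'P, hcT⟩ := Finset.mem_biUnion.mp hcB
      have hq'lt : x < y := (Finset.mem_filter.mp hq'P).2
      have hcS := hTsub _ hcT
      rw [hSdef, Finset.mem_filter] at hcS
      have hρ0 := (hcS.2 (ρ 0)).mp h0
      have hρ1 := (hcS.2 (ρ 1)).mp h1
      have hq0eq : q0 = (x, y) := by
        rcases hρ0 with e1 | e1 <;> rcases hρ1 with e2 | e2
        · exact absurd (e1.trans e2.symm) hij
        · rw [hq0, if_pos (e1 ▸ e2 ▸ hq'lt)]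
          exact Prod.ext e1 e2
        · rw [hq0, if_neg (by rw [e1, e2]; exact not_lt_of_gt hq'lt)]
          exact Prod.ext e2 e1
        · exact absurd (e1.trans e2.symm) hij
      rw [hq0eq]
      exact hcT
  have hle' := Finset.card_le_card hsubT
  rw [hTcard q0 hq0lt] at hle'
  have : p ≤ p - 1 := le_trans hcount hle'
  exact absurd this (Nat.not_le.mpr (Nat.sub_lt hp Nat.one_pos))

theorem forb_pK2 (m p : ℕ) (hp : 1 ≤ p) (hm : 2 ≤ m) (h : p - 1 ≤ 2 ^ (m - 2)) :
    forb m 3 (pK2 p) = 2 ^ m + m * 2 ^ (m - 1) + (p - 1) * Nat.choose m 2 := by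
  obtain ⟨A, hAavoid, hAcard⟩ := lower_bound hp hm h
  have hm1 : 1 ≤ m := le_trans one_le_two hm
  set N := 2 ^ m + m * 2 ^ (m - 1) + (p - 1) * Nat.choose m 2 with hN
  have hub : ∀ n ∈ {n : ℕ | ∃ B : Finset (Fin m → Fin 3), ¬ ConfigIn (pK2 p) B ∧ B.card = n},
      n ≤ N := by
    rintro n ⟨B, hB, rfl⟩
    exact upper_bound hp hm1 B hB
  have hAc : A.card = N := le_antisymm (upper_bound hp hm1 A hAavoid) hAcard
  have hmem : N ∈ {n : ℕ | ∃ B : Finset (Fin m → Fin 3), ¬ ConfigIn (pK2 p) B ∧ B.card = n} :=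
    ⟨A, hAavoid, hAc⟩
  unfold forb
  exact le_antisymm (csSup_le ⟨N, hmem⟩ hub) (le_csSup ⟨N, hub⟩ hmem)
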